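/- Let G be a fuzzy graph of order p such that both G and its complement Ḡ are non-trivial. Then 2(μ_min(G) + μ_min(Ḡ)) ≤ γ_snR(G) + γ_snR(Ḡ) < 2p. -/

import Mathlib

noncomputable section
open scoped Classical
open Finset

/-- A fuzzy graph on a vertex set `V`. -/
structure FuzzyGraph (V : Type*) where
  σ : V → ℝ
  μ : V → V → ℝ
  σ_nonneg : ∀ v, 0 ≤ σ v
  σ_le_one : ∀ v, σ v ≤ 1
  μ_nonneg : ∀ u v, 0 ≤ μ u v
  μ_symm : ∀ u v, μ u v = μ v u
  μ_le : ∀ u v, μ u v ≤ min (σ u) (σ v)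
  μ_irrefl : ∀ v, μ v v = 0

namespace FuzzyGraph

variable {V : Type*} (G : FuzzyGraph V)

/-- The strength of a walk (given as its list of vertices): the minimum
membership value of its edges (1 for walks without edges). -/
def walkStrength (l : List V) : ℝ :=
  ((l.zip l.tail).map fun p => G.μ p.1 p.2).foldr min 1

/-- `l` is a `u`–`v` walk: it starts at `u`, ends at `v`, and consecutive
vertices are joined by edges of positive membership. -/
def IsWalk (u v : V) (l : List V) : Prop :=
  l.head? = some u ∧ l.getLast? = some v ∧ l.Chain' (fun a b => 0 < G.μ a b)

/-- `CONN_G(u,v)`: the maximum strength over all `u`–`v` paths. -/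
def conn (u v : V) : ℝ :=
  sSup {s | ∃ l : List V, G.IsWalk u v l ∧ 2 ≤ l.length ∧ s = G.walkStrength l}

/-- The edge `(u,v)` is strong. -/
def StrongEdge (u v : V) : Prop :=
  0 < G.μ u v ∧ G.μ u v = G.conn u v

/-- `μ_s(u)`: the minimum membership value among strong edges at `u`
(`0` if `u` has no strong neighbor, via `Real.sInf_empty`). -/
def mus (u : V) : ℝ :=
  sInf {x | ∃ v, G.StrongEdge u v ∧ x = G.μ u v}

/-- The strong neighborhood degree `d_SN(v)`. -/
def dSN [Fintype V] (v : V) : ℝ :=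
  ∑ u ∈ Finset.univ.filter (fun u => G.StrongEdge v u), G.σ u

/-- `D` is a strong dominating set. -/
def IsStrongDomSet (D : Finset V) : Prop :=
  ∀ v, v ∉ D → ∃ u ∈ D, G.StrongEdge v u

/-- The weight of a strong dominating set. -/
def domWeight (D : Finset V) : ℝ := ∑ u ∈ D, G.mus u

/-- The strong domination number `γ_s(G)`. -/
def gammaS [Fintype V] : ℝ :=
  sInf {w | ∃ D : Finset V, G.IsStrongDomSet D ∧ w = G.domWeight D}

/-- `f` is a strong-neighbors Roman dominating function (SNRDF). -/
def IsSNRDF (f : V → ℕ) : Prop :=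
  (∀ v, f v ≤ 2) ∧ ∀ v, f v = 0 → ∃ u, G.StrongEdge v u ∧ f u = 2

/-- The weight of an SNRDF. -/
def snrdfWeight [Fintype V] (f : V → ℕ) : ℝ := ∑ v, (f v : ℝ) * G.mus v

/-- The strong-neighbors Roman domination number `γ_snR(G)`. -/
def gammaSnR [Fintype V] : ℝ :=
  sInf {w | ∃ f : V → ℕ, G.IsSNRDF f ∧ w = G.snrdfWeight f}

/-- The fuzzy subgraph induced by the vertices satisfying `p`. -/
def induce (p : V → Prop) : FuzzyGraph {v // p v} where
  σ v := G.σ v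
  μ u v := G.μ u v
  σ_nonneg v := G.σ_nonneg v
  σ_le_one v := G.σ_le_one v
  μ_nonneg u v := G.μ_nonneg u v
  μ_symm u v := G.μ_symm u v
  μ_le u v := G.μ_le u v
  μ_irrefl v := G.μ_irrefl v

/-- The minimum membership value among the strong edges of `G`. -/
def muMin : ℝ := sInf {x | ∃ u v, G.StrongEdge u v ∧ x = G.μ u v}

/-- The complement of a fuzzy graph. -/
def compl : FuzzyGraph V where
  σ := G.σ
  μ u v := if u = v then 0 else min (G.σ u) (G.σ v) - G.μ u v
  σ_nonneg := G.σ_nonneg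
  σ_le_one := G.σ_le_one
  μ_nonneg u v := by
    by_cases h : u = v
    · simp [h]
    · simp only [if_neg h, sub_nonneg]
      exact G.μ_le u v
  μ_symm u v := by
    by_cases h : u = v
    · simp [h]
    · have h' : ¬ v = u := fun hh => h hh.symm
      simp only [if_neg h, if_neg h', min_comm (G.σ u), G.μ_symm u v]
  μ_le u v := by
    by_cases h : u = v
    · subst h
      simp only [if_pos rfl, le_min_iff]
      exact ⟨G.σ_nonneg u, G.σ_nonneg u⟩
    · simp only [if_neg h]
      have := G.μ_nonneg u v
      linarith
  μ_irrefl v := by simp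

end FuzzyGraph

section Aux

namespace FuzzyGraph

variable {V : Type*} (G : FuzzyGraph V)

/-! ### Basic facts about `mus` -/

lemma mus_bddBelow (v : V) :
    BddBelow {x | ∃ u, G.StrongEdge v u ∧ x = G.μ v u} :=
  ⟨0, by rintro x ⟨u, _, rfl⟩; exact G.μ_nonneg v u⟩

lemma mus_nonneg (v : V) : 0 ≤ G.mus v :=
  Real.sInf_nonneg (by rintro x ⟨u, _, rfl⟩; exact G.μ_nonneg v u)

lemma mus_le {v u : V} (h : G.StrongEdge v u) : G.mus v ≤ G.μ v u :=
  csInf_le (G.mus_bddBelow v) ⟨u, h, rfl⟩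

lemma mu_le_sigma_left (u v : V) : G.μ u v ≤ G.σ u :=
  (G.μ_le u v).trans (min_le_left _ _)

lemma mu_le_sigma_right (u v : V) : G.μ u v ≤ G.σ v :=
  (G.μ_le u v).trans (min_le_right _ _)

lemma mus_le_sigma (v : V) : G.mus v ≤ G.σ v := by
  by_cases hne : {x | ∃ u, G.StrongEdge v u ∧ x = G.μ v u}.Nonempty
  · obtain ⟨x, u, hu, rfl⟩ := hne
    exact (G.mus_le hu).trans (G.mu_le_sigma_left v u)
  · rw [mus, Set.not_nonempty_iff_eq_empty.mp hne, Real.sInf_empty]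
    exact G.σ_nonneg v

/-! ### Walk strength -/

lemma walkStrength_nil : G.walkStrength [] = 1 := rfl

lemma walkStrength_singleton (a : V) : G.walkStrength [a] = 1 := rfl

lemma walkStrength_cons_cons (a b : V) (l : List V) :
    G.walkStrength (a :: b :: l) = min (G.μ a b) (G.walkStrength (b :: l)) := rfl

lemma foldr_min_le_init : ∀ (l : List ℝ) (b : ℝ), l.foldr min b ≤ b
  | [], b => le_rfl
  | a :: t, b => (min_le_right _ _).trans (foldr_min_le_init t b)

lemma walkStrength_le_one (l : List V) : G.walkStrength l ≤ 1 :=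
  foldr_min_le_init _ _

lemma walkStrength_pair {a b : V} :
    G.walkStrength [a, b] = G.μ a b := by
  have h1 : G.μ a b ≤ 1 := (G.mu_le_sigma_left a b).trans (G.σ_le_one a)
  simp [walkStrength_cons_cons, walkStrength_singleton, min_eq_left h1]

lemma isWalk_pair {a b : V} (h : 0 < G.μ a b) : G.IsWalk a b [a, b] := by
  refine ⟨rfl, rfl, ?_⟩
  simp [List.Chain', List.isChain_cons_cons, h]

/-! ### Bounds on `conn` -/

lemma conn_bddAbove (u v : V) :
    BddAbove {s | ∃ l : List V, G.IsWalk u v l ∧ 2 ≤ l.length ∧ s = G.walkStrength l} :=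
  ⟨1, by rintro s ⟨l, _, _, rfl⟩; exact G.walkStrength_le_one l⟩

lemma mu_le_conn {u v : V} (h : 0 < G.μ u v) : G.μ u v ≤ G.conn u v := by
  have hm : ∃ l : List V, G.IsWalk u v l ∧ 2 ≤ l.length ∧ G.μ u v = G.walkStrength l :=
    ⟨[u, v], G.isWalk_pair h, by norm_num, (G.walkStrength_pair).symm⟩
  exact le_csSup (G.conn_bddAbove u v) hm

lemma conn_le {u v : V} (h : 0 < G.μ u v) {c : ℝ}
    (hc : ∀ l : List V, G.IsWalk u v l → 2 ≤ l.length → G.walkStrength l ≤ c) :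
    G.conn u v ≤ c := by
  have hne : Set.Nonempty
      {s | ∃ l : List V, G.IsWalk u v l ∧ 2 ≤ l.length ∧ s = G.walkStrength l} :=
    ⟨G.μ u v, [u, v], G.isWalk_pair h, by norm_num, (G.walkStrength_pair).symm⟩
  apply csSup_le hne
  rintro s ⟨l, hw, hl, rfl⟩
  exact hc l hw hl

/-- A walk of length ≥ 2 starting at `u` has shape `u :: x :: t`. -/
lemma walk_shape {u v : V} {l : List V} (hw : G.IsWalk u v l) (hl : 2 ≤ l.length) :
    ∃ x t, l = u :: x :: t := by
  obtain ⟨h1, _, _⟩ := hw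
  match l, hl with
  | a :: b :: t, _ =>
    refine ⟨b, t, ?_⟩
    simp only [List.head?_cons, Option.some.injEq] at h1
    rw [h1]

lemma strong_of_max {u v : V} (hpos : 0 < G.μ u v) (hmax : ∀ x, G.μ u x ≤ G.μ u v) :
    G.StrongEdge u v := by
  refine ⟨hpos, le_antisymm (G.mu_le_conn hpos) ?_⟩
  apply G.conn_le hpos
  intro l hw hl
  obtain ⟨x, t, rfl⟩ := G.walk_shape hw hl
  rw [walkStrength_cons_cons]
  exact (min_le_left _ _).trans (hmax x)

lemma exists_strongEdge [Fintype V] (hG : ∃ u v : V, 0 < G.μ u v) :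
    ∃ a b : V, G.StrongEdge a b := by
  obtain ⟨u, v, huv⟩ := hG
  have : Nonempty (V × V) := ⟨(u, v)⟩
  obtain ⟨⟨a, b⟩, -, hmax⟩ :=
    Finset.exists_max_image (Finset.univ : Finset (V × V)) (fun p => G.μ p.1 p.2)
      Finset.univ_nonempty
  have hab : 0 < G.μ a b := lt_of_lt_of_le huv (hmax (u, v) (Finset.mem_univ _))
  exact ⟨a, b, G.strong_of_max hab fun x => hmax (a, x) (Finset.mem_univ _)⟩

/-! ### Symmetry of strong edges -/

private def edgeList (l : List V) : List (V × V) := l.zip l.tail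

private lemma edgeList_eq (l : List V) : edgeList l = l.zip l.tail := rfl

lemma walkStrength_eq_edgeList (l : List V) :
    G.walkStrength l = ((edgeList l).map fun p => G.μ p.1 p.2).foldr min 1 := rfl

private lemma edgeList_append_last :
    ∀ (m : List V) (a : V),
      edgeList (m ++ [a]) = edgeList m ++ (m.getLast?.map fun x => (x, a)).toList
  | [], a => rfl
  | [x], a => rfl
  | x :: y :: t, a => by
    have ih := edgeList_append_last (y :: t) a
    simp only [edgeList, List.cons_append, List.zip_cons_cons, List.tail_cons] at ih ⊢
    rw [ih, List.getLast?_cons_cons]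

private lemma edgeList_reverse :
    ∀ l : List V, edgeList l.reverse = (edgeList l).reverse.map Prod.swap
  | [] => rfl
  | [a] => rfl
  | a :: b :: t => by
    have ih := edgeList_reverse (b :: t)
    have h1 : (a :: b :: t).reverse = (b :: t).reverse ++ [a] := by simp
    rw [h1, edgeList_append_last, ih, List.getLast?_reverse]
    simp [edgeList, List.zip_cons_cons]

private lemma foldr_min_min (a b : ℝ) :
    ∀ l : List ℝ, l.foldr min (min a b) = min a (l.foldr min b)
  | [] => rfl
  | c :: t => by
    simp only [List.foldr_cons, foldr_min_min a b t]
    rw [min_left_comm]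

private lemma foldr_min_reverse :
    ∀ (l : List ℝ) (b : ℝ), l.reverse.foldr min b = l.foldr min b
  | [], b => rfl
  | a :: t, b => by
    simp only [List.reverse_cons, List.foldr_append, List.foldr_cons, List.foldr_nil]
    rw [foldr_min_reverse t (min a b), foldr_min_min]

lemma walkStrength_reverse (l : List V) :
    G.walkStrength l.reverse = G.walkStrength l := by
  have hcomp : ((fun p : V × V => G.μ p.1 p.2) ∘ Prod.swap) = fun p : V × V => G.μ p.1 p.2 := by
    funext p; exact G.μ_symm p.2 p.1
  rw [walkStrength_eq_edgeList, walkStrength_eq_edgeList, edgeList_reverse,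
    List.map_map, hcomp, List.map_reverse, foldr_min_reverse]

lemma isWalk_reverse {u v : V} {l : List V} (h : G.IsWalk u v l) :
    G.IsWalk v u l.reverse := by
  obtain ⟨h1, h2, h3⟩ := h
  refine ⟨?_, ?_, ?_⟩
  · rw [List.head?_reverse]; exact h2
  · rw [List.getLast?_reverse]; exact h1
  · unfold List.Chain' at h3
    rw [List.Chain', List.isChain_reverse]
    exact h3.imp fun a b hab => by simpa [G.μ_symm a b] using hab

lemma conn_symm (u v : V) : G.conn u v = G.conn v u := by
  unfold conn
  congr 1
  ext s
  constructor
  · rintro ⟨l, hw, hl, rfl⟩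
    exact ⟨l.reverse, G.isWalk_reverse hw, by simpa using hl, (G.walkStrength_reverse l).symm⟩
  · rintro ⟨l, hw, hl, rfl⟩
    exact ⟨l.reverse, G.isWalk_reverse hw, by simpa using hl, (G.walkStrength_reverse l).symm⟩

lemma strongEdge_symm {u v : V} (h : G.StrongEdge u v) : G.StrongEdge v u := by
  refine ⟨by rw [G.μ_symm v u]; exact h.1, ?_⟩
  rw [G.μ_symm v u, G.conn_symm v u]
  exact h.2

lemma strongEdge_ne {u v : V} (h : G.StrongEdge u v) : u ≠ v := by
  rintro rfl
  simpa [G.μ_irrefl] using h.1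

/-! ### `muMin` facts -/

lemma muMin_le_mus {v u : V} (h : G.StrongEdge v u) : G.muMin ≤ G.mus v := by
  apply csInf_le_csInf
  · exact ⟨0, by rintro x ⟨a, b, _, rfl⟩; exact G.μ_nonneg a b⟩
  · exact ⟨G.μ v u, u, h, rfl⟩
  · rintro x ⟨w, hw, rfl⟩; exact ⟨v, w, hw, rfl⟩

/-! ### `gammaSnR` facts -/

lemma isSNRDF_one : G.IsSNRDF (fun _ => 1) :=
  ⟨fun _ => one_le_two, fun _ h => absurd h one_ne_zero⟩

lemma snrdfWeight_nonneg [Fintype V] (f : V → ℕ) : 0 ≤ G.snrdfWeight f :=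
  Finset.sum_nonneg fun v _ => mul_nonneg (Nat.cast_nonneg _) (G.mus_nonneg v)

lemma gammaSnR_le [Fintype V] {f : V → ℕ} (hf : G.IsSNRDF f) :
    G.gammaSnR ≤ G.snrdfWeight f :=
  csInf_le ⟨0, by rintro w ⟨g, hg, rfl⟩; exact G.snrdfWeight_nonneg g⟩ ⟨f, hf, rfl⟩

lemma le_gammaSnR [Fintype V] {c : ℝ} (h : ∀ f : V → ℕ, G.IsSNRDF f → c ≤ G.snrdfWeight f) :
    c ≤ G.gammaSnR :=
  le_csInf ⟨_, fun _ => 1, G.isSNRDF_one, rfl⟩ (by rintro w ⟨f, hf, rfl⟩; exact h f hf)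

lemma gammaSnR_le_sum_mus [Fintype V] : G.gammaSnR ≤ ∑ v, G.mus v := by
  have h := G.gammaSnR_le G.isSNRDF_one
  simpa [snrdfWeight] using h

/-! ### Lower bound -/

lemma two_muMin_le_gammaSnR [Fintype V] (hG : ∃ u v : V, 0 < G.μ u v) :
    2 * G.muMin ≤ G.gammaSnR := by
  apply G.le_gammaSnR
  intro f hf
  by_cases h0 : ∃ v, f v = 0
  · obtain ⟨v, hv⟩ := h0
    obtain ⟨u, hsu, hu2⟩ := hf.2 v hv
    have h1 : (f u : ℝ) * G.mus u ≤ G.snrdfWeight f := by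
      unfold snrdfWeight
      exact Finset.single_le_sum (f := fun v => (f v : ℝ) * G.mus v)
        (fun i _ => mul_nonneg (Nat.cast_nonneg _) (G.mus_nonneg i)) (Finset.mem_univ u)
    have h2 : G.muMin ≤ G.mus u := G.muMin_le_mus (G.strongEdge_symm hsu)
    have h3 : (f u : ℝ) = 2 := by rw [hu2]; norm_num
    rw [h3] at h1
    linarith
  · push_neg at h0
    obtain ⟨a, b, hab⟩ := G.exists_strongEdge hG
    have hne : a ≠ b := G.strongEdge_ne hab
    have hsum : ∑ x ∈ ({a, b} : Finset V), (f x : ℝ) * G.mus x ≤ G.snrdfWeight f := by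
      unfold snrdfWeight
      apply Finset.sum_le_sum_of_subset_of_nonneg (Finset.subset_univ _)
      intro i _ _
      exact mul_nonneg (Nat.cast_nonneg _) (G.mus_nonneg i)
    rw [Finset.sum_pair hne] at hsum
    have hfa : (1 : ℝ) ≤ f a := by exact_mod_cast Nat.one_le_iff_ne_zero.mpr (h0 a)
    have hfb : (1 : ℝ) ≤ f b := by exact_mod_cast Nat.one_le_iff_ne_zero.mpr (h0 b)
    have h4 : G.mus a ≤ (f a : ℝ) * G.mus a :=
      le_mul_of_one_le_left (G.mus_nonneg a) hfa
    have h5 : G.mus b ≤ (f b : ℝ) * G.mus b :=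
      le_mul_of_one_le_left (G.mus_nonneg b) hfb
    have h6 : G.muMin ≤ G.mus a := G.muMin_le_mus hab
    have h7 : G.muMin ≤ G.mus b := G.muMin_le_mus (G.strongEdge_symm hab)
    linarith

end FuzzyGraph

end Aux

section Aux2

namespace FuzzyGraph

variable {V : Type*} (G : FuzzyGraph V)

lemma compl_sigma (v : V) : G.compl.σ v = G.σ v := rfl

lemma compl_mu (u v : V) :
    G.compl.μ u v = if u = v then 0 else min (G.σ u) (G.σ v) - G.μ u v := rfl

lemma strong_mu_eq (he : ∀ v, G.mus v = G.σ v) {v u : V} (h : G.StrongEdge v u) :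
    G.μ v u = G.σ v ∧ G.σ u = G.σ v := by
  have h1 : G.σ v ≤ G.μ v u := by rw [← he v]; exact G.mus_le h
  have h2 : G.μ v u ≤ G.σ v := G.mu_le_sigma_left v u
  have heq : G.μ v u = G.σ v := le_antisymm h2 h1
  have h3 : G.σ v ≤ G.σ u := heq ▸ G.mu_le_sigma_right v u
  have h4 : G.σ u ≤ G.σ v := by
    have h5 := G.mus_le (G.strongEdge_symm h)
    rw [he u, G.μ_symm u v, heq] at h5
    exact h5
  exact ⟨heq, le_antisymm h4 h3⟩

lemma exists_strong_nbr (he : ∀ v, G.mus v = G.σ v) {v : V} (hv : 0 < G.σ v) :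
    ∃ u, G.StrongEdge v u := by
  by_contra hcon
  push_neg at hcon
  have hempty : {x | ∃ u, G.StrongEdge v u ∧ x = G.μ v u} = ∅ := by
    ext x
    simp only [Set.mem_setOf_eq, Set.mem_empty_iff_false, iff_false]
    rintro ⟨u, hu, -⟩
    exact hcon u hu
  have h0 : G.mus v = 0 := by rw [mus, hempty, Real.sInf_empty]
  rw [he v] at h0
  linarith

lemma gammaSnR_le_of_two_strong [Fintype V] (he : ∀ v, G.mus v = G.σ v)
    {v u1 u2 : V} (h12 : u1 ≠ u2) (h1 : G.StrongEdge v u1) (h2 : G.StrongEdge v u2) :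
    G.gammaSnR ≤ (∑ x, G.σ x) - G.σ v := by
  have hv1 : v ≠ u1 := G.strongEdge_ne h1
  have hv2 : v ≠ u2 := G.strongEdge_ne h2
  set f : V → ℕ := fun x => if x = v then 2 else if x = u1 ∨ x = u2 then 0 else 1 with hf
  have hfv : f v = 2 := by simp [hf]
  have hσ1 : G.σ u1 = G.σ v := (G.strong_mu_eq he h1).2
  have hσ2 : G.σ u2 = G.σ v := (G.strong_mu_eq he h2).2
  have hsn : G.IsSNRDF f := by
    constructor
    · intro x
      simp only [hf]
      split_ifs <;> omega
    · intro x hx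
      have hx' : x = u1 ∨ x = u2 := by
        by_contra hcon
        push_neg at hcon
        rcases eq_or_ne x v with rfl | hxv
        · rw [hfv] at hx; exact absurd hx (by norm_num)
        · have hone : f x = 1 := by simp [hf, hxv, hcon.1, hcon.2]
          omega
      rcases hx' with rfl | rfl
      · exact ⟨v, G.strongEdge_symm h1, hfv⟩
      · exact ⟨v, G.strongEdge_symm h2, hfv⟩
  have hweight : G.snrdfWeight f = (∑ x, G.σ x) - G.σ v := by
    unfold snrdfWeight
    have hpt : ∀ x : V, (f x : ℝ) * G.mus x
        = G.σ x + ((if x = v then G.σ v else 0)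
          - (if x = u1 then G.σ v else 0) - (if x = u2 then G.σ v else 0)) := by
      intro x
      rw [he x]
      rcases eq_or_ne x v with rfl | hxv
      · rw [if_pos rfl, if_neg hv1, if_neg hv2, hfv]
        push_cast
        ring
      · rcases eq_or_ne x u1 with rfl | hx1
        · rw [if_neg hxv, if_pos rfl, if_neg h12]
          have hfx : f x = 0 := by simp [hf, hxv]
          rw [hfx, hσ1]
          push_cast
          ring
        · rcases eq_or_ne x u2 with rfl | hx2
          · rw [if_neg hxv, if_neg hx1, if_pos rfl]
            have hfx : f x = 0 := by simp [hf, hxv, hx1]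
            rw [hfx, hσ2]
            push_cast
            ring
          · rw [if_neg hxv, if_neg hx1, if_neg hx2]
            have hfx : f x = 1 := by simp [hf, hxv, hx1, hx2]
            rw [hfx]
            push_cast
            ring
    rw [Finset.sum_congr rfl fun x _ => hpt x, Finset.sum_add_distrib,
      Finset.sum_sub_distrib, Finset.sum_sub_distrib]
    simp only [Finset.sum_ite_eq', Finset.mem_univ, if_true]
    ring
  have := G.gammaSnR_le hsn
  rw [hweight] at this
  exact this

lemma case_c_false [Fintype V]
    (he : ∀ v, G.mus v = G.σ v) (he' : ∀ v, G.compl.mus v = G.σ v)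
    (hc : ∀ v u1 u2 : V, G.StrongEdge v u1 → G.StrongEdge v u2 → u1 = u2)
    (hc' : ∀ v u1 u2 : V, G.compl.StrongEdge v u1 → G.compl.StrongEdge v u2 → u1 = u2)
    (hG : ∃ u v : V, 0 < G.μ u v) : False := by
  obtain ⟨a, b, hab⟩ := hG
  have hsa : 0 < G.σ a := lt_of_lt_of_le hab (G.mu_le_sigma_left a b)
  have he'' : ∀ v, G.compl.mus v = G.compl.σ v := he'
  -- strong G-neighbor u of a
  obtain ⟨u, hu⟩ := G.exists_strong_nbr he hsa
  obtain ⟨hμau, hσu⟩ := G.strong_mu_eq he hu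
  have hua : u ≠ a := (G.strongEdge_ne hu).symm
  -- strong Ḡ-neighbor w of a
  obtain ⟨w, hw⟩ := G.compl.exists_strong_nbr he'' (show 0 < G.compl.σ a from hsa)
  obtain ⟨hμaw, hσw⟩ := G.compl.strong_mu_eq he'' hw
  have haw : a ≠ w := G.compl.strongEdge_ne hw
  have hσw' : G.σ w = G.σ a := hσw
  have hμaw0 : G.μ a w = 0 := by
    rw [compl_mu, if_neg haw, hσw', min_self] at hμaw
    have : G.compl.σ a = G.σ a := rfl
    rw [this] at hμaw
    linarith
  have huw : u ≠ w := by
    intro h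
    rw [h, hμaw0] at hμau
    linarith
  -- strong Ḡ-neighbor y of u
  have hsu : 0 < G.σ u := by rw [hσu]; exact hsa
  obtain ⟨y, hy⟩ := G.compl.exists_strong_nbr he'' (show 0 < G.compl.σ u from hsu)
  obtain ⟨hμuy, hσy⟩ := G.compl.strong_mu_eq he'' hy
  have hya : y ≠ a := by
    intro h
    subst h
    have h0 : G.compl.μ u y = 0 := by
      rw [compl_mu, if_neg hua, G.μ_symm u y, hμau, hσu, min_self]
      ring
    have := hy.1
    rw [h0] at this
    exact lt_irrefl 0 this
  by_cases hyw : y = w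
  · subst hyw
    exact hua (hc' y u a (G.compl.strongEdge_symm hy) (G.compl.strongEdge_symm hw))
  · -- μ u w > 0
    have hμuw : 0 < G.μ u w := by
      rcases (G.μ_nonneg u w).lt_or_eq with h | h
      · exact h
      · exfalso
        have hmuw : G.compl.μ u w = G.σ u := by
          rw [compl_mu, if_neg huw, ← h, hσw', ← hσu, min_self]
          ring
        have hpos : 0 < G.compl.μ u w := by rw [hmuw]; exact hsu
        have hmax : ∀ x, G.compl.μ u x ≤ G.compl.μ u w := by
          intro x
          rw [hmuw]
          exact G.compl.mu_le_sigma_left u x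
        exact hyw (hc' u y w hy (G.compl.strong_of_max hpos hmax))
    have hnstrong : ¬ G.StrongEdge u w := by
      intro hs
      exact haw (hc u w a hs (G.strongEdge_symm hu)).symm
    -- maximal positive non-strong pair
    set C : Finset (V × V) := Finset.univ.filter
      (fun pq => 0 < G.μ pq.1 pq.2 ∧ ¬ G.StrongEdge pq.1 pq.2) with hC
    have hCne : C.Nonempty := ⟨(u, w), by simp [hC, hμuw, hnstrong]⟩
    obtain ⟨⟨p, q⟩, hmem, hmax⟩ := Finset.exists_max_image C (fun pq => G.μ pq.1 pq.2) hCne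
    rw [hC, Finset.mem_filter] at hmem
    obtain ⟨-, hpq, hpqn⟩ := hmem
    have hsp : 0 < G.σ p := lt_of_lt_of_le hpq (G.mu_le_sigma_left p q)
    obtain ⟨r, hr⟩ := G.exists_strong_nbr he hsp
    have hqp : q ≠ p := by
      intro h
      subst h
      simp [G.μ_irrefl] at hpq
    have hqr : q ≠ r := fun h => hpqn (h ▸ hr)
    -- any positive walk from {p, r} to q has strength at most μ p q
    have key : ∀ (l : List V) (x0 : V), (x0 = p ∨ x0 = r) →
        (x0 :: l).Chain' (fun s t => 0 < G.μ s t) →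
        (x0 :: l).getLast? = some q → l ≠ [] →
        G.walkStrength (x0 :: l) ≤ G.μ p q := by
      intro l
      induction l with
      | nil => intro x0 _ _ _ hne; exact absurd rfl hne
      | cons x1 rest ih =>
        intro x0 hx0 hchain hlast _
        obtain ⟨hpos, hchain'⟩ := List.isChain_cons_cons.mp hchain
        rw [walkStrength_cons_cons]
        by_cases hs : G.StrongEdge x0 x1
        · have hx1 : x1 = p ∨ x1 = r := by
            rcases hx0 with rfl | rfl
            · exact Or.inr (hc x0 x1 r hs hr)
            · exact Or.inl (hc x0 x1 p hs (G.strongEdge_symm hr))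
          cases rest with
          | nil =>
            exfalso
            rw [List.getLast?_cons_cons] at hlast
            simp only [List.getLast?_singleton, Option.some.injEq] at hlast
            rcases hx1 with rfl | rfl
            · exact hqp hlast.symm
            · exact hqr hlast.symm
          | cons x2 rest2 =>
            rw [List.getLast?_cons_cons] at hlast
            have hih := ih x1 hx1 hchain' hlast (List.cons_ne_nil _ _)
            exact (min_le_right _ _).trans hih
        · have hCmem : (x0, x1) ∈ C := by simp [hC, hpos, hs]
          exact (min_le_left _ _).trans (hmax (x0, x1) hCmem)
    have hconn : G.conn p q ≤ G.μ p q := by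
      apply G.conn_le hpq
      intro l hwk hl
      obtain ⟨x, t, rfl⟩ := G.walk_shape hwk hl
      exact key (x :: t) p (Or.inl rfl) hwk.2.2 hwk.2.1 (List.cons_ne_nil _ _)
    exact hpqn ⟨hpq, le_antisymm (G.mu_le_conn hpq) hconn⟩

end FuzzyGraph

end Aux2

/-- Nordhaus–Gaddum-type inequalities for `γ_snR`. -/
theorem nordhaus_gaddum_gammaSnR {V : Type*} [Fintype V]
    (G : FuzzyGraph V)
    (hG : ∃ u v : V, 0 < G.μ u v)
    (hGc : ∃ u v : V, 0 < G.compl.μ u v) :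
    2 * (G.muMin + G.compl.muMin) ≤ G.gammaSnR + G.compl.gammaSnR ∧
      G.gammaSnR + G.compl.gammaSnR < 2 * ∑ v : V, G.σ v := by
  constructor
  · have h1 := G.two_muMin_le_gammaSnR hG
    have h2 := G.compl.two_muMin_le_gammaSnR hGc
    linarith
  · have hg1 : G.gammaSnR ≤ ∑ v, G.mus v := G.gammaSnR_le_sum_mus
    have hg2 : G.compl.gammaSnR ≤ ∑ v, G.compl.mus v := G.compl.gammaSnR_le_sum_mus
    by_cases ha : ∀ v, 2 * G.σ v ≤ G.mus v + G.compl.mus v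
    · have he : ∀ v, G.mus v = G.σ v := by
        intro v
        have h3 := G.mus_le_sigma v
        have h4 : G.compl.mus v ≤ G.σ v := G.compl.mus_le_sigma v
        have h5 := ha v
        linarith
      have he' : ∀ v, G.compl.mus v = G.σ v := by
        intro v
        have h3 := G.mus_le_sigma v
        have h4 : G.compl.mus v ≤ G.σ v := G.compl.mus_le_sigma v
        have h5 := ha v
        linarith
      have hsum1 : ∑ v, G.mus v = ∑ v : V, G.σ v :=
        Finset.sum_congr rfl fun v _ => he v
      have hsum2 : ∑ v, G.compl.mus v = ∑ v : V, G.σ v :=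
        Finset.sum_congr rfl fun v _ => he' v
      by_cases hbc : ∀ v u1 u2 : V, G.StrongEdge v u1 → G.StrongEdge v u2 → u1 = u2
      · by_cases hbc' : ∀ v u1 u2 : V,
            G.compl.StrongEdge v u1 → G.compl.StrongEdge v u2 → u1 = u2
        · exact (G.case_c_false he he' hbc hbc' hG).elim
        · push_neg at hbc'
          obtain ⟨v, u1, u2, hs1, hs2, h12⟩ := hbc'
          have he'' : ∀ v, G.compl.mus v = G.compl.σ v := he'
          have hbd : G.compl.gammaSnR ≤ (∑ x, G.σ x) - G.σ v :=
            G.compl.gammaSnR_le_of_two_strong he'' h12 hs1 hs2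
          have hσv : 0 < G.σ v :=
            lt_of_lt_of_le hs1.1 (G.compl.mu_le_sigma_left v u1)
          linarith
      · push_neg at hbc
        obtain ⟨v, u1, u2, hs1, hs2, h12⟩ := hbc
        have hbd : G.gammaSnR ≤ (∑ x, G.σ x) - G.σ v :=
          G.gammaSnR_le_of_two_strong he h12 hs1 hs2
        have hσv : 0 < G.σ v := lt_of_lt_of_le hs1.1 (G.mu_le_sigma_left v u1)
        linarith
    · push_neg at ha
      obtain ⟨v, hv⟩ := ha
      have hlt : ∑ i : V, (G.mus i + G.compl.mus i) < ∑ i : V, 2 * G.σ i := by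
        apply Finset.sum_lt_sum
        · intro i _
          have h3 := G.mus_le_sigma i
          have h4 : G.compl.mus i ≤ G.σ i := G.compl.mus_le_sigma i
          linarith
        · exact ⟨v, Finset.mem_univ v, hv⟩
      rw [Finset.sum_add_distrib] at hlt
      have h6 : ∑ i : V, 2 * G.σ i = 2 * ∑ i : V, G.σ i := by
        rw [Finset.mul_sum]
      linarith
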